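/- Let {x_k} be a normalized complete minimal system with biorthogonal {x_k*}, and let σ ⊆ ℕ be such that the mixed system {x_k}_{k∈σ} ∪ {x_k*}_{k∈σ^c} is complete. Then the map σ ↦ P_σ is continuous at σ: whenever σ^m → σ in the product topology on {0,1}^ℕ, the projections P_{σ^m} converge pointwise to P_σ. -/

import Mathlib

open Filter Topology

noncomputable section

variable {H : Type*} [NormedAddCommGroup H] [InnerProductSpace ℂ H] [CompleteSpace H]

/-- Closed linear span of a set of vectors. -/
def clSpan (s : Set H) : Submodule ℂ H := (Submodule.span ℂ s).topologicalClosure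

instance (s : Set H) : CompleteSpace (clSpan s) :=
  (Submodule.isClosed_topologicalClosure _).completeSpace_coe

/-- Orthogonal projection onto the closed linear span of `s`, as a map `H → H`. -/
def projS (s : Set H) : H →L[ℂ] H :=
  (clSpan s).subtypeL ∘L (clSpan s).orthogonalProjection

/-- The system `x` is complete: its closed linear span is all of `H`. -/
def IsCompleteSystem (x : ℕ → H) : Prop := clSpan (Set.range x) = ⊤

/-- The system `x` is minimal: no vector lies in the closed span of the others. -/
def IsMinimalSystem (x : ℕ → H) : Prop :=
  ∀ k, x k ∉ clSpan (x '' {j | j ≠ k})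

/-- `y` is biorthogonal to `x`. -/
def IsBiorthogonal (x y : ℕ → H) : Prop :=
  ∀ k j, (inner ℂ (x k) (y j) : ℂ) = if k = j then 1 else 0

section aux

lemma projS_eq_self {s : Set H} {v : H} (hv : v ∈ clSpan s) : projS s v = v := by
  exact (Submodule.starProjection_eq_self_iff (K := clSpan s)).mpr hv

omit [CompleteSpace H] in
lemma mem_clSpan_of_mem {s : Set H} {v : H} (hv : v ∈ s) : v ∈ clSpan s :=
  (Submodule.span ℂ s).le_topologicalClosure (Submodule.subset_span hv)

lemma projS_eq_zero {s : Set H} {v : H} (hv : ∀ u ∈ s, (inner ℂ u v : ℂ) = 0) :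
    projS s v = 0 := by
  have hv' : v ∈ (clSpan s)ᗮ := by
    rw [Submodule.mem_orthogonal']
    intro u hu
    have hle : clSpan s ≤ LinearMap.ker ((innerSL ℂ v : H →L[ℂ] ℂ) : H →ₗ[ℂ] ℂ) := by
      apply Submodule.topologicalClosure_minimal
      · rw [Submodule.span_le]
        intro u hu
        simp only [SetLike.mem_coe, LinearMap.mem_ker, ContinuousLinearMap.coe_coe,
          innerSL_apply_apply]
        rw [← inner_conj_symm]
        simp [hv u hu]
      · exact ContinuousLinearMap.isClosed_ker _
    have := hle hu
    simp only [LinearMap.mem_ker, ContinuousLinearMap.coe_coe, innerSL_apply_apply] at this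
    exact this
  simpa [projS] using
    congrArg (Subtype.val) (Submodule.orthogonalProjectionOnto_apply_of_mem_orthogonal hv')

lemma projS_norm_le (s : Set H) (v : H) : ‖projS s v‖ ≤ ‖v‖ := by
  have : ‖projS s v‖ = ‖(clSpan s).orthogonalProjection v‖ := by
    simp [projS]
  rw [this]
  calc ‖(clSpan s).orthogonalProjection v‖ ≤ 1 * ‖v‖ :=
        ((clSpan s).orthogonalProjection).le_of_opNorm_le (Submodule.orthogonalProjection_norm_le _) v
    _ = ‖v‖ := one_mul _

end aux

/-- If the mixed system for `σ` is complete, then `σ ↦ P_σ` is continuous at `σ`: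
whenever `σᵐ → σ` in the product topology (eventual agreement on each initial segment),
the projections `P_{σᵐ}` converge pointwise to `P_σ`. -/
theorem proj_map_continuous_at_of_mixed_complete [TopologicalSpace.SeparableSpace H]
    (x y : ℕ → H) (hc : IsCompleteSystem x) (hmin : IsMinimalSystem x)
    (hbi : IsBiorthogonal x y) (hnorm : ∀ k, ‖x k‖ = 1)
    (σ : Set ℕ) (hmix : clSpan (x '' σ ∪ y '' σᶜ) = ⊤)
    (σ' : ℕ → Set ℕ)
    (hconv : ∀ n : ℕ, ∃ M : ℕ, ∀ m ≥ M, ∀ k ≤ n, (k ∈ σ' m ↔ k ∈ σ)) :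
    ∀ v : H, Tendsto (fun m => projS (x '' σ' m) v) atTop (𝓝 (projS (x '' σ) v)) := by
  intro v
  rw [Metric.tendsto_atTop]
  intro ε hε
  have hdense : Dense ((Submodule.span ℂ (x '' σ ∪ y '' σᶜ) : Submodule ℂ H) : Set H) :=
    Submodule.dense_iff_topologicalClosure_eq_top.mpr hmix
  have key : ∀ w ∈ Submodule.span ℂ (x '' σ ∪ y '' σᶜ),
      ∃ M, ∀ m ≥ M, projS (x '' σ' m) w = projS (x '' σ) w := by
    intro w hw
    induction hw using Submodule.span_induction with
    | mem u hu =>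
      rcases hu with ⟨k, hk, rfl⟩ | ⟨k, hk, rfl⟩
      · obtain ⟨M, hM⟩ := hconv k
        refine ⟨M, fun m hm => ?_⟩
        have hk' : k ∈ σ' m := (hM m hm k le_rfl).mpr hk
        rw [projS_eq_self (mem_clSpan_of_mem (Set.mem_image_of_mem x hk')),
          projS_eq_self (mem_clSpan_of_mem (Set.mem_image_of_mem x hk))]
      · obtain ⟨M, hM⟩ := hconv k
        refine ⟨M, fun m hm => ?_⟩
        have hk' : k ∉ σ' m := fun h => hk ((hM m hm k le_rfl).mp h)
        have horth : ∀ (τ : Set ℕ), k ∉ τ → projS (x '' τ) (y k) = 0 := by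
          intro τ hkτ
          refine projS_eq_zero fun u hu => ?_
          rcases hu with ⟨j, hj, rfl⟩
          have : j ≠ k := fun h => hkτ (h ▸ hj)
          simpa [this] using hbi j k
        rw [horth _ hk', horth _ hk]
    | zero => exact ⟨0, fun m _ => by simp⟩
    | add u v hu hv ihu ihv =>
      obtain ⟨M₁, h₁⟩ := ihu; obtain ⟨M₂, h₂⟩ := ihv
      exact ⟨max M₁ M₂, fun m hm => by
        simp [map_add, h₁ m (le_trans (le_max_left _ _) hm),
          h₂ m (le_trans (le_max_right _ _) hm)]⟩
    | smul a u hu ihu =>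
      obtain ⟨M, h⟩ := ihu
      exact ⟨M, fun m hm => by simp [map_smul, h m hm]⟩
  obtain ⟨w, hw, hvw⟩ : ∃ w ∈ Submodule.span ℂ (x '' σ ∪ y '' σᶜ), dist v w < ε / 3 := by
    obtain ⟨w, hw, hd⟩ := Metric.mem_closure_iff.mp (hdense v) (ε / 3) (by linarith)
    exact ⟨w, hw, hd⟩
  obtain ⟨M, hM⟩ := key w hw
  refine ⟨M, fun m hm => ?_⟩
  rw [dist_eq_norm]
  have hsplit : projS (x '' σ' m) v - projS (x '' σ) v
      = projS (x '' σ' m) (v - w) + projS (x '' σ) (w - v) := by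
    rw [map_sub, map_sub, hM m hm]; abel
  rw [hsplit]
  have h1 : ‖projS (x '' σ' m) (v - w)‖ ≤ ‖v - w‖ := projS_norm_le _ _
  have h2 : ‖projS (x '' σ) (w - v)‖ ≤ ‖w - v‖ := projS_norm_le _ _
  have hd : ‖v - w‖ < ε / 3 := by rwa [dist_eq_norm] at hvw
  have hd' : ‖w - v‖ < ε / 3 := by rwa [norm_sub_rev]
  calc ‖projS (x '' σ' m) (v - w) + projS (x '' σ) (w - v)‖
      ≤ ‖projS (x '' σ' m) (v - w)‖ + ‖projS (x '' σ) (w - v)‖ := norm_add_le _ _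
    _ < ε := by linarith
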